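/- Let F be a field, let p be a polynomial in m variables (m ≥ 1) with coefficients in F that is not the zero polynomial and has total degree at most d, and let C be a nonempty finite subset of F. Then the number of points a ∈ C^m with p(a) = 0 is at most d · |C|^{m-1}. -/

import Mathlib

open MvPolynomial Finset

private lemma sz_aux {F : Type*} [Field F] [DecidableEq F] :
    ∀ (n : ℕ) (p : MvPolynomial (Fin n) F), p ≠ 0 → ∀ C : Finset F,
    ((Fintype.piFinset fun _ : Fin n => C).filter
        fun a => MvPolynomial.eval a p = 0).card ≤ p.totalDegree * C.card ^ (n - 1) := by
  intro n
  induction n with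
  | zero =>
    intro p hp C
    obtain ⟨c, rfl⟩ := C_surjective (Fin 0) p
    have hc : c ≠ 0 := by simpa using hp
    have : ((Fintype.piFinset fun _ : Fin 0 => C).filter
        fun a => MvPolynomial.eval a (MvPolynomial.C c) = 0) = ∅ := by
      apply filter_eq_empty_iff.2
      intro a _
      simpa using hc
    simp [this, hc]
  | succ n ih =>
    intro p hp C
    set P := finSuccEquiv F n p with hPdef
    have hP : P ≠ 0 := by
      simpa [hPdef] using (finSuccEquiv F n).injective.ne hp
    set k := P.natDegree with hk
    set q := P.leadingCoeff with hq
    have hq0 : q ≠ 0 := Polynomial.leadingCoeff_ne_zero.2 hP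
    have hqk : q.totalDegree + k ≤ p.totalDegree :=
      totalDegree_coeff_finSuccEquiv_add_le p k (by exact hq0)
    set T := Fintype.piFinset fun _ : Fin n => C with hT
    have hTcard : T.card = C.card ^ n := by
      simp [hT, Fintype.card_piFinset]
    set N := (T.filter fun s => MvPolynomial.eval s q = 0).card with hN
    have hNle : N ≤ q.totalDegree * C.card ^ (n - 1) := ih q hq0 C
    -- inject zeros into pairs (tail, head)
    have hinj : ((Fintype.piFinset fun _ : Fin (n+1) => C).filter
        fun a => MvPolynomial.eval a p = 0).card ≤
        ((T ×ˢ C).filter fun z => MvPolynomial.eval (Fin.cons z.2 z.1) p = 0).card := by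
      apply Finset.card_le_card_of_injOn (fun a => (Fin.tail a, a 0))
      · intro a ha
        simp only [mem_coe, mem_filter, Fintype.mem_piFinset] at ha
        simp only [mem_coe, mem_filter, mem_product, hT, Fintype.mem_piFinset]
        refine ⟨⟨fun i => ha.1 i.succ, ha.1 0⟩, ?_⟩
        rw [Fin.cons_self_tail]
        exact ha.2
      · intro a _ b _ hab
        simp only [Prod.mk.injEq] at hab
        have h2 : (Fin.cons (a 0) (Fin.tail a) : Fin (n+1) → F) =
            Fin.cons (b 0) (Fin.tail b) := by rw [hab.1, hab.2]
        simpa [Fin.cons_self_tail] using h2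
    -- split the pairs
    have hsub : ((T ×ˢ C).filter fun z => MvPolynomial.eval (Fin.cons z.2 z.1) p = 0) ⊆
        ((T.filter fun s => MvPolynomial.eval s q = 0) ×ˢ C) ∪
        ((T.filter fun s => MvPolynomial.eval s q ≠ 0).biUnion fun s =>
          (C.filter fun y => Polynomial.eval y (P.map (MvPolynomial.eval s)) = 0).image
            fun y => (s, y)) := by
      intro z hz
      simp only [mem_filter, mem_product] at hz
      obtain ⟨⟨hz1, hz2⟩, hz3⟩ := hz
      by_cases hzq : MvPolynomial.eval z.1 q = 0
      · exact mem_union_left _ (by simp [mem_product, mem_filter, hz1, hz2, hzq])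
      · apply mem_union_right
        apply mem_biUnion.2
        refine ⟨z.1, by simp [mem_filter, hz1, hzq], ?_⟩
        apply mem_image.2
        refine ⟨z.2, ?_, by simp⟩
        rw [mem_filter]
        refine ⟨hz2, ?_⟩
        rw [← eval_eq_eval_mv_eval']
        exact hz3
    -- bound the second piece fiberwise
    have hfiber : ∀ s ∈ T.filter fun s => MvPolynomial.eval s q ≠ 0,
        ((C.filter fun y => Polynomial.eval y (P.map (MvPolynomial.eval s)) = 0).image
          fun y => (s, y)).card ≤ k := by
      intro s hs
      rw [mem_filter] at hs
      set g := P.map (MvPolynomial.eval s) with hg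
      have hgk : g.coeff k ≠ 0 := by
        rw [hg, Polynomial.coeff_map]
        exact hs.2
      have hg0 : g ≠ 0 := fun h => hgk (by simp [h])
      calc ((C.filter fun y => Polynomial.eval y g = 0).image fun y => (s, y)).card
          ≤ (C.filter fun y => Polynomial.eval y g = 0).card := Finset.card_image_le
        _ ≤ g.natDegree := by
            apply Polynomial.card_le_degree_of_subset_roots
            intro y hy
            simp only [Finset.mem_val, mem_filter] at hy
            exact (Polynomial.mem_roots hg0).2 hy.2
        _ ≤ k := Polynomial.natDegree_map_le
    have hbiUnion : ((T.filter fun s => MvPolynomial.eval s q ≠ 0).biUnion fun s =>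
          (C.filter fun y => Polynomial.eval y (P.map (MvPolynomial.eval s)) = 0).image
            fun y => (s, y)).card ≤ C.card ^ n * k := by
      calc _ ≤ ∑ s ∈ T.filter fun s => MvPolynomial.eval s q ≠ 0,
              ((C.filter fun y => Polynomial.eval y (P.map (MvPolynomial.eval s)) = 0).image
                fun y => (s, y)).card := Finset.card_biUnion_le
        _ ≤ ∑ _s ∈ T.filter fun s => MvPolynomial.eval s q ≠ 0, k :=
            Finset.sum_le_sum hfiber
        _ = (T.filter fun s => MvPolynomial.eval s q ≠ 0).card * k := by
            rw [Finset.sum_const, smul_eq_mul]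
        _ ≤ T.card * k := by
            gcongr
            exact Finset.filter_subset _ _
        _ = C.card ^ n * k := by rw [hTcard]
    -- bound the first piece
    have hfirst : N * C.card ≤ q.totalDegree * C.card ^ n := by
      rcases Nat.eq_zero_or_pos n with hn | hn
      · subst hn
        obtain ⟨c, hc⟩ := C_surjective (Fin 0) q
        have htd : q.totalDegree = 0 := by rw [← hc]; exact totalDegree_C c
        have hN0 : N = 0 := le_antisymm (by simpa [htd] using hNle) (Nat.zero_le _)
        simp [hN0]
      · have hpred : n - 1 + 1 = n := Nat.succ_pred_eq_of_pos hn
        calc N * C.card ≤ (q.totalDegree * C.card ^ (n - 1)) * C.card := by gcongr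
          _ = q.totalDegree * C.card ^ (n - 1 + 1) := by ring
          _ = q.totalDegree * C.card ^ n := by rw [hpred]
    calc ((Fintype.piFinset fun _ : Fin (n+1) => C).filter
            fun a => MvPolynomial.eval a p = 0).card
        ≤ _ := hinj
      _ ≤ _ := Finset.card_le_card hsub
      _ ≤ ((T.filter fun s => MvPolynomial.eval s q = 0) ×ˢ C).card +
            ((T.filter fun s => MvPolynomial.eval s q ≠ 0).biUnion fun s =>
              (C.filter fun y => Polynomial.eval y (P.map (MvPolynomial.eval s)) = 0).image
                fun y => (s, y)).card := Finset.card_union_le _ _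
      _ ≤ q.totalDegree * C.card ^ n + C.card ^ n * k := by
          rw [Finset.card_product]
          exact Nat.add_le_add hfirst hbiUnion
      _ ≤ p.totalDegree * C.card ^ n := by
          calc q.totalDegree * C.card ^ n + C.card ^ n * k
              = (q.totalDegree + k) * C.card ^ n := by ring
            _ ≤ p.totalDegree * C.card ^ n := Nat.mul_le_mul_right _ hqk

/-- Counting form of the Schwartz–Zippel lemma: a nonzero polynomial in `m ≥ 1` variables of
total degree at most `d` has at most `d * |C|^(m-1)` zeros in `C^m`. -/
theorem schwartz_zippel_card {F : Type*} [Field F] [DecidableEq F] {m d : ℕ} (hm : 1 ≤ m)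
    (p : MvPolynomial (Fin m) F) (hp : p ≠ 0) (hd : p.totalDegree ≤ d)
    (C : Finset F) (hC : C.Nonempty) :
    ((Fintype.piFinset fun _ : Fin m => C).filter
        fun a => MvPolynomial.eval a p = 0).card ≤ d * C.card ^ (m - 1) := by
  exact (sz_aux m p hp C).trans (Nat.mul_le_mul_right _ hd)
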